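/- Define f : ℝ² → (−∞,∞] by f(0,0) = 0 and f(x,y) = ∞ otherwise, and fₙ(x,y) = n·|y + n·x|. Then each fₙ is convex, lower semicontinuous, and proper; fₙ → f pointwise; yet on the compact set K = [−1,0] × {1} ⊆ ℝ² (disjoint from the closure of dom f) one has inf_K fₙ = 0 for all n, so fₙ does not tend to ∞ uniformly on K. -/

import Mathlib

open Filter Set

/-- Example: `f(0,0) = 0`, `f = ∞` elsewhere; `fₙ(x,y) = n |y + n x|`.
Each `fₙ` is convex and lower semicontinuous (and real-valued, hence proper);
`fₙ → f` pointwise; yet on the compact set `K = [−1,0] × {1}`, disjoint from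
the closure of `dom f`, one has `inf_K fₙ = 0` for `n ≥ 1`, so `fₙ` does not
tend to `∞` uniformly on `K`. -/
theorem stmt_13 (f : ℝ × ℝ → EReal)
    (hf0 : f (0, 0) = 0) (hf : ∀ p : ℝ × ℝ, p ≠ (0, 0) → f p = ⊤)
    (F : ℕ → ℝ × ℝ → ℝ) (hFdef : ∀ n p, F n p = (n : ℝ) * |p.2 + (n : ℝ) * p.1|) :
    (∀ n, ConvexOn ℝ Set.univ (F n)) ∧
    (∀ n, LowerSemicontinuous (F n)) ∧
    (∀ p : ℝ × ℝ, Filter.Tendsto (fun n => ((F n p : EReal))) Filter.atTop (nhds (f p))) ∧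
    IsCompact (Set.Icc (-1 : ℝ) 0 ×ˢ ({1} : Set ℝ)) ∧
    Disjoint (Set.Icc (-1 : ℝ) 0 ×ˢ ({1} : Set ℝ)) (closure {p : ℝ × ℝ | f p ≠ ⊤}) ∧
    (∀ n : ℕ, 0 < n → sInf (F n '' (Set.Icc (-1 : ℝ) 0 ×ˢ ({1} : Set ℝ))) = 0) ∧
    ¬ (∀ M : ℝ, ∀ᶠ n in Filter.atTop,
        ∀ p ∈ Set.Icc (-1 : ℝ) 0 ×ˢ ({1} : Set ℝ), M ≤ F n p) := by
  have hFfun : ∀ n, F n = fun p : ℝ × ℝ => (n : ℝ) * |p.2 + (n : ℝ) * p.1| := by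
    intro n; funext p; exact hFdef n p
  -- the witness point -1/n for n ≥ 1
  have key : ∀ n : ℕ, 0 < n →
      ((-1 / (n:ℝ), (1:ℝ)) ∈ Set.Icc (-1 : ℝ) 0 ×ˢ ({1} : Set ℝ)) ∧
      F n (-1 / (n:ℝ), 1) = 0 := by
    intro n hn
    have hn1 : (1 : ℝ) ≤ n := Nat.one_le_cast.mpr hn
    have hpos : (0 : ℝ) < n := by linarith
    have hne : (n : ℝ) ≠ 0 := ne_of_gt hpos
    refine ⟨⟨⟨?_, ?_⟩, rfl⟩, ?_⟩
    · show (-1 : ℝ) ≤ -1 / (n : ℝ)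
      rw [neg_div]
      exact neg_le_neg ((div_le_one hpos).mpr hn1)
    · show (-1 : ℝ) / (n : ℝ) ≤ 0
      rw [neg_div]
      exact neg_nonpos.mpr (by positivity)
    · have hc : ((-1 / (n:ℝ), (1:ℝ)).2 + (n : ℝ) * (-1 / (n:ℝ), (1:ℝ)).1) = 0 := by
        show (1 : ℝ) + (n : ℝ) * (-1 / (n : ℝ)) = 0
        field_simp
        ring
      rw [hFdef, hc, abs_zero, mul_zero]
  refine ⟨?_, ?_, ?_, ?_, ?_, ?_, ?_⟩
  · -- convexity
    intro n
    rw [hFfun]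
    have h1 : ConvexOn ℝ Set.univ (fun x : ℝ => |x|) := by
      exact (convexOn_univ_norm (E := ℝ))
    have h2 := (h1.comp_affineMap
      (((LinearMap.snd ℝ ℝ ℝ) + (n : ℝ) • (LinearMap.fst ℝ ℝ ℝ)).toAffineMap))
    have h3 := h2.smul (c := (n : ℝ)) (Nat.cast_nonneg n)
    simpa [Function.comp, smul_eq_mul, add_comm, mul_comm] using h3
  · intro n
    apply Continuous.lowerSemicontinuous
    rw [hFfun]
    fun_prop
  · intro p
    by_cases hp : p = (0, 0)
    · subst hp
      rw [hf0]
      have h0 : ∀ n, ((F n (0,0) : EReal)) = (0 : EReal) := by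
        intro n; rw [hFdef]; norm_num
      simp only [h0]
      exact tendsto_const_nhds
    · rw [hf p hp]
      rw [EReal.tendsto_nhds_top_iff_real]
      intro x
      have keyp : ∀ᶠ n : ℕ in atTop, x < F n p := by
        rcases eq_or_ne p.1 0 with h1 | h1
        · have h2 : p.2 ≠ 0 := by
            intro h2; exact hp (Prod.ext h1 h2)
          have hp2 : 0 < |p.2| := abs_pos.mpr h2
          have : Tendsto (fun n : ℕ => (n : ℝ) * |p.2|) atTop atTop :=
            (tendsto_natCast_atTop_atTop).atTop_mul_const hp2
          filter_upwards [this.eventually_gt_atTop x] with n hn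
          rw [hFdef, h1]
          simpa using hn
        · have hp1 : 0 < |p.1| := abs_pos.mpr h1
          have hlarge : ∀ᶠ n : ℕ in atTop, (1 + |p.2|) / |p.1| ≤ (n : ℝ) :=
            tendsto_natCast_atTop_atTop.eventually_ge_atTop _
          have hx : ∀ᶠ n : ℕ in atTop, x < (n : ℝ) :=
            tendsto_natCast_atTop_atTop.eventually_gt_atTop x
          filter_upwards [hlarge, hx] with n hn hxn
          rw [hFdef]
          have h5 : 1 + |p.2| ≤ (n : ℝ) * |p.1| := by
            rw [div_le_iff₀ hp1] at hn; linarith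
          have h6 : (1 : ℝ) ≤ |p.2 + (n : ℝ) * p.1| := by
            have h7 := abs_sub_abs_le_abs_sub ((n : ℝ) * p.1) (-p.2)
            rw [sub_neg_eq_add, abs_neg] at h7
            have habs : |(n:ℝ) * p.1| = (n:ℝ) * |p.1| := by
              rw [abs_mul, Nat.abs_cast]
            rw [habs] at h7
            have h8 : |p.2 + (n : ℝ) * p.1| = |(n : ℝ) * p.1 + p.2| := by
              rw [add_comm]
            rw [h8]
            linarith
          calc x < (n : ℝ) := hxn
            _ = (n : ℝ) * 1 := (mul_one _).symm
            _ ≤ (n : ℝ) * |p.2 + (n : ℝ) * p.1| :=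
                mul_le_mul_of_nonneg_left h6 (Nat.cast_nonneg n)
      filter_upwards [keyp] with n hn
      exact_mod_cast hn
  · exact isCompact_Icc.prod isCompact_singleton
  · have hset : {p : ℝ × ℝ | f p ≠ ⊤} = {((0:ℝ), (0:ℝ))} := by
      ext p
      simp only [Set.mem_setOf_eq, Set.mem_singleton_iff]
      constructor
      · intro h; by_contra hne; exact h (hf p hne)
      · intro h; subst h; rw [hf0]; simp
    rw [hset, closure_singleton, Set.disjoint_singleton_right]
    simp
  · intro n hn
    obtain ⟨hmem, hval⟩ := key n hn
    apply le_antisymm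
    · exact csInf_le ⟨0, by rintro y ⟨q, _, rfl⟩; rw [hFdef]; positivity⟩
        ⟨_, hmem, hval⟩
    · apply le_csInf ((Set.nonempty_of_mem hmem).image (F n))
      rintro y ⟨q, _, rfl⟩; rw [hFdef]; positivity
  · intro h
    obtain ⟨n, hn1, hn⟩ := ((eventually_ge_atTop 1).and (h 1)).exists
    obtain ⟨hmem, hval⟩ := key n hn1
    have := hn _ hmem
    rw [hval] at this
    norm_num at this
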